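/- arXiv:2311.07927 — 7 statements merged into one kernel-verified Lean document; each statement's English description precedes it below -/
import Mathlib

section
/- If F satisfies assumption (A), then for every λ ∈ ℝ, Colev_{<^l}(F, λq) = [Ψ_F ≤ λ]. -/
open Pointwise

/-- The Gerstewitz scalarization function `ψ^q_P(y) = sup {t : ℝ | y ∈ t • q + P}`. -/
noncomputable def psi {Y : Type*} [AddCommGroup Y] [Module ℝ Y] (P : Set Y) (q : Y) (y : Y) : ℝ :=
  sSup {t : ℝ | y - t • q ∈ P}

/-- The scalarization of the set-valued map `F`: `Ψ_F(x) = inf_{z ∈ F(x)} ψ^q_P(z)`. -/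
noncomputable def PsiF {X Y : Type*} [AddCommGroup Y] [Module ℝ Y]
    (P : Set Y) (q : Y) (F : X → Set Y) (x : X) : EReal :=
  ⨅ z ∈ F x, ((psi P q z : ℝ) : EReal)

/-- The colevel set of `F` at height `λ • q`. -/
def Colev {X Y : Type*} [AddCommGroup Y] [Module ℝ Y] [TopologicalSpace Y]
    (P : Set Y) (q : Y) (F : X → Set Y) (lam : ℝ) : Set X :=
  {x | ¬ F x ⊆ {y : Y | y - lam • q ∈ interior P}}

/-- Assumption (A): `ψ^q_P` attains its infimum on `F(x)` for all `x`. -/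
def AssumptionA {X Y : Type*} [AddCommGroup Y] [Module ℝ Y]
    (P : Set Y) (q : Y) (F : X → Set Y) : Prop :=
  ∀ x : X, ∃ z ∈ F x, ∀ w ∈ F x, psi P q z ≤ psi P q w

section helpers

set_option linter.unusedSectionVars false

variable {Y : Type*} [AddCommGroup Y] [Module ℝ Y] [TopologicalSpace Y]
  [IsTopologicalAddGroup Y] [ContinuousSMul ℝ Y]
  {P : Set Y} {q : Y}

lemma coneP_add (hPconv : Convex ℝ P) (hPcone : ∀ c : ℝ, 0 < c → ∀ y ∈ P, c • y ∈ P)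
    {a b : Y} (ha : a ∈ P) (hb : b ∈ P) : a + b ∈ P := by
  have h := hPconv ha hb (by norm_num : (0:ℝ) ≤ 1/2) (by norm_num : (0:ℝ) ≤ 1/2) (by norm_num)
  have h2 := hPcone 2 (by norm_num) _ h
  have : (2:ℝ) • ((1/2:ℝ) • a + (1/2:ℝ) • b) = a + b := by
    rw [smul_add, smul_smul, smul_smul]; norm_num
  rwa [this] at h2

lemma coneP_smul (hP0 : (0:Y) ∈ P) (hPcone : ∀ c : ℝ, 0 < c → ∀ y ∈ P, c • y ∈ P)
    {c : ℝ} (hc : 0 ≤ c) {y : Y} (hy : y ∈ P) : c • y ∈ P := by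
  rcases hc.eq_or_lt with rfl | h
  · simpa using hP0
  · exact hPcone c h y hy

lemma add_interiorP (hPconv : Convex ℝ P) (hPcone : ∀ c : ℝ, 0 < c → ∀ y ∈ P, c • y ∈ P)
    {a b : Y} (ha : a ∈ P) (hb : b ∈ interior P) : a + b ∈ interior P := by
  have hsub : (fun y => a + y) '' interior P ⊆ P := by
    rintro _ ⟨c, hc, rfl⟩
    exact coneP_add hPconv hPcone ha (interior_subset hc)
  have hopen : IsOpen ((fun y => a + y) '' interior P) :=
    (isOpenMap_add_left a) _ isOpen_interior
  exact interior_maximal hsub hopen ⟨b, hb, rfl⟩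

lemma smul_interiorP (hPcone : ∀ c : ℝ, 0 < c → ∀ y ∈ P, c • y ∈ P)
    {c : ℝ} (hc : 0 < c) {y : Y} (hy : y ∈ interior P) : c • y ∈ interior P := by
  have hsub : (fun z => c • z) '' interior P ⊆ P := by
    rintro _ ⟨d, hd, rfl⟩
    exact hPcone c hc d (interior_subset hd)
  have hopen : IsOpen ((fun z : Y => c • z) '' interior P) :=
    (isOpenMap_smul₀ (ne_of_gt hc)) _ isOpen_interior
  exact interior_maximal hsub hopen ⟨y, hy, rfl⟩

lemma negq_notP (hPconv : Convex ℝ P)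
    (hPcone : ∀ c : ℝ, 0 < c → ∀ y ∈ P, c • y ∈ P)
    (hPuniv : P ≠ Set.univ) (hq : q ∈ interior P) (hneg : -q ∈ P) : False := by
  apply hPuniv
  have h0 : (0:Y) ∈ interior P := by
    have := add_interiorP hPconv hPcone hneg hq
    simpa using this
  ext y
  simp only [Set.mem_univ, iff_true]
  have hcont : Filter.Tendsto (fun ε : ℝ => ε • y) (nhds 0) (nhds (0:Y)) := by
    have : Filter.Tendsto (fun ε : ℝ => ε • y) (nhds 0) (nhds ((0:ℝ) • y)) :=
      (continuous_id.smul continuous_const).tendsto 0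
    simpa using this
  have h1 : ∀ᶠ ε in nhdsWithin (0:ℝ) (Set.Ioi 0), ε • y ∈ interior P :=
    (hcont.eventually (IsOpen.mem_nhds isOpen_interior h0)).filter_mono nhdsWithin_le_nhds
  obtain ⟨ε, hεP, hεpos⟩ := (h1.and (eventually_mem_nhdsWithin)).exists
  have hεpos' : (0:ℝ) < ε := hεpos
  have := hPcone ε⁻¹ (by positivity) _ (interior_subset hεP)
  rwa [smul_smul, inv_mul_cancel₀ (ne_of_gt hεpos'), one_smul] at this

lemma S_nonempty (hP0 : (0:Y) ∈ P) (hPcone : ∀ c : ℝ, 0 < c → ∀ y ∈ P, c • y ∈ P)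
    (hq : q ∈ interior P) (y : Y) :
    {t : ℝ | y - t • q ∈ P}.Nonempty := by
  have hcont : Filter.Tendsto (fun ε : ℝ => ε • y + q) (nhds 0) (nhds q) := by
    have : Filter.Tendsto (fun ε : ℝ => ε • y + q) (nhds 0) (nhds ((0:ℝ) • y + q)) :=
      ((continuous_id.smul continuous_const).add continuous_const).tendsto 0
    simpa using this
  have h1 : ∀ᶠ ε in nhdsWithin (0:ℝ) (Set.Ioi 0), ε • y + q ∈ interior P :=
    (hcont.eventually (IsOpen.mem_nhds isOpen_interior hq)).filter_mono nhdsWithin_le_nhds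
  obtain ⟨ε, hεP, hεpos⟩ := (h1.and (eventually_mem_nhdsWithin)).exists
  have hεpos' : (0:ℝ) < ε := hεpos
  refine ⟨-ε⁻¹, ?_⟩
  have := hPcone ε⁻¹ (by positivity) _ (interior_subset hεP)
  have heq : ε⁻¹ • (ε • y + q) = y - (-ε⁻¹) • q := by
    rw [smul_add, smul_smul, inv_mul_cancel₀ (ne_of_gt hεpos'), one_smul, neg_smul, sub_neg_eq_add]
  rwa [heq] at this

lemma S_bddAbove (hP0 : (0:Y) ∈ P) (hPconv : Convex ℝ P)
    (hPcone : ∀ c : ℝ, 0 < c → ∀ y ∈ P, c • y ∈ P) (hPclosed : IsClosed P)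
    (hPuniv : P ≠ Set.univ) (hq : q ∈ interior P) (y : Y) :
    BddAbove {t : ℝ | y - t • q ∈ P} := by
  have hneg : -q ∉ P := fun h => negq_notP hPconv hPcone hPuniv hq h
  have htend : Filter.Tendsto (fun t : ℝ => t⁻¹ • y - q) Filter.atTop (nhds (-q)) := by
    have h1 : Filter.Tendsto (fun t : ℝ => t⁻¹ • y) Filter.atTop (nhds ((0:ℝ) • y)) :=
      tendsto_inv_atTop_zero.smul_const y
    have h2 := h1.sub_const q
    simpa using h2
  have hev : ∀ᶠ t in Filter.atTop, (fun t : ℝ => t⁻¹ • y - q) t ∈ Pᶜ :=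
    htend.eventually (IsOpen.mem_nhds hPclosed.isOpen_compl hneg)
  obtain ⟨M, hM⟩ := (hev.and (Filter.eventually_ge_atTop 1)).exists_forall_of_atTop
  refine ⟨max M 1, fun t ht => ?_⟩
  by_contra hlt
  push_neg at hlt
  have htM : M ≤ t := le_trans (le_max_left _ _) hlt.le
  have ht1 : (1:ℝ) ≤ t := le_trans (le_max_right _ _) hlt.le
  have htpos : (0:ℝ) < t := lt_of_lt_of_le one_pos ht1
  obtain ⟨hcomp, -⟩ := hM t htM
  apply hcomp
  have := hPcone t⁻¹ (by positivity) _ ht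
  have heq : t⁻¹ • (y - t • q) = t⁻¹ • y - q := by
    rw [smul_sub, smul_smul, inv_mul_cancel₀ (ne_of_gt htpos), one_smul]
  rwa [heq] at this

lemma S_closed (hPclosed : IsClosed P) (y : Y) :
    IsClosed {t : ℝ | y - t • q ∈ P} :=
  hPclosed.preimage (continuous_const.sub (continuous_id.smul continuous_const))

variable (hP0 : (0:Y) ∈ P) (hPconv : Convex ℝ P)
  (hPcone : ∀ c : ℝ, 0 < c → ∀ y ∈ P, c • y ∈ P) (hPclosed : IsClosed P)
  (hPuniv : P ≠ Set.univ) (hq : q ∈ interior P)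

include hP0 hPconv hPcone hPclosed hPuniv hq

lemma psi_self_mem (y : Y) : y - (psi P q y) • q ∈ P :=
  (S_closed hPclosed y).csSup_mem (S_nonempty hP0 hPcone hq y)
    (S_bddAbove hP0 hPconv hPcone hPclosed hPuniv hq y)

lemma le_psi_iff (y : Y) (t : ℝ) : t ≤ psi P q y ↔ y - t • q ∈ P := by
  constructor
  · intro h
    have hmem := psi_self_mem hP0 hPconv hPcone hPclosed hPuniv hq y
    have hs : (psi P q y - t) • q ∈ P :=
      coneP_smul hP0 hPcone (by linarith) (interior_subset hq)
    have heq : (y - (psi P q y) • q) + (psi P q y - t) • q = y - t • q := by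
      rw [sub_smul]; abel
    rw [← heq]
    exact coneP_add hPconv hPcone hmem hs
  · intro h
    exact le_csSup (S_bddAbove hP0 hPconv hPcone hPclosed hPuniv hq y) h

lemma lt_psi_iff (y : Y) (t : ℝ) : t < psi P q y ↔ y - t • q ∈ interior P := by
  constructor
  · intro h
    have hmem := psi_self_mem hP0 hPconv hPcone hPclosed hPuniv hq y
    have hs : (psi P q y - t) • q ∈ interior P :=
      smul_interiorP hPcone (by linarith) hq
    have heq : (y - (psi P q y) • q) + (psi P q y - t) • q = y - t • q := by
      rw [sub_smul]; abel
    rw [← heq]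
    exact add_interiorP hPconv hPcone hmem hs
  · intro h
    have hcont : Filter.Tendsto (fun s : ℝ => y - s • q) (nhds t) (nhds (y - t • q)) :=
      (continuous_const.sub (continuous_id.smul continuous_const)).tendsto t
    have h1 : ∀ᶠ s in nhdsWithin t (Set.Ioi t), y - s • q ∈ interior P :=
      (hcont.eventually (IsOpen.mem_nhds isOpen_interior h)).filter_mono nhdsWithin_le_nhds
    obtain ⟨s, hsP, hst⟩ := (h1.and (eventually_mem_nhdsWithin)).exists
    have : s ≤ psi P q y :=
      (le_psi_iff hP0 hPconv hPcone hPclosed hPuniv hq y s).mpr (interior_subset hsP)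
    exact lt_of_lt_of_le hst this

end helpers

/-- If `F` satisfies assumption (A), then for every `λ ∈ ℝ`,
`Colev_{<ˡ}(F, λq) = [Ψ_F ≤ λ]`. -/
theorem stmt4 {X Y : Type*} [TopologicalSpace X] [T2Space X]
    [AddCommGroup Y] [Module ℝ Y] [TopologicalSpace Y]
    [IsTopologicalAddGroup Y] [ContinuousSMul ℝ Y] [T2Space Y]
    (P : Set Y) (hPclosed : IsClosed P) (hPconv : Convex ℝ P)
    (hP0 : (0 : Y) ∈ P) (hPcone : ∀ c : ℝ, 0 < c → ∀ y ∈ P, c • y ∈ P)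
    (hPne : P ≠ {0}) (hPuniv : P ≠ Set.univ)
    (q : Y) (hq : q ∈ interior P)
    (F : X → Set Y) (hF : ∀ x, (F x).Nonempty)
    (hA : AssumptionA P q F) (lam : ℝ) :
    Colev P q F lam = {x : X | PsiF P q F x ≤ (lam : EReal)} := by
  ext x
  simp only [Colev, Set.mem_setOf_eq, Set.not_subset]
  constructor
  · rintro ⟨z, hzF, hz⟩
    have hψ : psi P q z ≤ lam := by
      by_contra h
      push_neg at h
      exact hz ((lt_psi_iff hP0 hPconv hPcone hPclosed hPuniv hq z lam).mp h)
    calc PsiF P q F x ≤ ((psi P q z : ℝ) : EReal) := iInf₂_le z hzF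
      _ ≤ (lam : EReal) := by exact_mod_cast hψ
  · intro h
    obtain ⟨z, hzF, hmin⟩ := hA x
    refine ⟨z, hzF, ?_⟩
    have hlb : ((psi P q z : ℝ) : EReal) ≤ PsiF P q F x :=
      le_iInf₂ fun w hw => by exact_mod_cast hmin w hw
    have hle : psi P q z ≤ lam := by exact_mod_cast hlb.trans h
    intro hint
    have := (lt_psi_iff hP0 hPconv hPcone hPclosed hPuniv hq z lam).mpr hint
    linarith
end

section
/- Suppose F is P-bounded-valued, i.e., every value F(x) is a P-bounded set. If Colev_{<^l}(F, λq) = [Ψ_F ≤ λ] for every λ ∈ ℝ, then F satisfies assumption (A). -/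
open Pointwise

/-- A set `A ⊆ Y` is `P`-bounded if for every neighborhood `U` of `0` there is `r > 0`
with `A ⊆ r • U + P`. -/
def PBounded {Y : Type*} [AddCommGroup Y] [Module ℝ Y] [TopologicalSpace Y]
    (P : Set Y) (A : Set Y) : Prop :=
  ∀ U ∈ nhds (0 : Y), ∃ r : ℝ, 0 < r ∧ A ⊆ r • U + P

open Filter

section helpers

variable {Y : Type*} [AddCommGroup Y] [Module ℝ Y] [TopologicalSpace Y]
  [IsTopologicalAddGroup Y] [ContinuousSMul ℝ Y]

lemma myAddP {P : Set Y} (hPconv : Convex ℝ P)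
    (hPcone : ∀ c : ℝ, 0 < c → ∀ y ∈ P, c • y ∈ P)
    {a b : Y} (ha : a ∈ P) (hb : b ∈ P) : a + b ∈ P := by
  have h := hPconv ha hb (by norm_num : (0:ℝ) ≤ 1/2) (by norm_num : (0:ℝ) ≤ 1/2)
    (by norm_num : (1:ℝ)/2 + 1/2 = 1)
  have h2 := hPcone 2 (by norm_num) _ h
  have : (2:ℝ) • ((1/2 : ℝ) • a + (1/2 : ℝ) • b) = a + b := by
    rw [smul_add, smul_smul, smul_smul]; norm_num
  rwa [this] at h2

lemma mySmulInt {P : Set Y}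
    (hPcone : ∀ c : ℝ, 0 < c → ∀ y ∈ P, c • y ∈ P)
    {c : ℝ} (hc : 0 < c) {v : Y} (hv : v ∈ interior P) : c • v ∈ interior P := by
  have hopen : IsOpen (c • interior P) := isOpen_interior.smul₀ hc.ne'
  have hsub : c • interior P ⊆ P := by
    rintro _ ⟨w, hw, rfl⟩
    exact hPcone c hc w (interior_subset hw)
  exact interior_maximal hsub hopen ⟨v, hv, rfl⟩

lemma myAddInt {P : Set Y} (hPconv : Convex ℝ P)
    (hPcone : ∀ c : ℝ, 0 < c → ∀ y ∈ P, c • y ∈ P)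
    {p v : Y} (hp : p ∈ P) (hv : v ∈ interior P) : p + v ∈ interior P := by
  have hopen : IsOpen ((p + ·) '' interior P) :=
    (Homeomorph.addLeft p).isOpenMap _ isOpen_interior
  have hsub : (p + ·) '' interior P ⊆ P := by
    rintro _ ⟨w, hw, rfl⟩
    exact myAddP hPconv hPcone hp (interior_subset hw)
  exact interior_maximal hsub hopen ⟨v, hv, rfl⟩

lemma myExistsPos (P : Set Y) {g : ℝ → Y} (hg : Continuous g) (h0 : g 0 ∈ interior P) :
    ∃ s : ℝ, 0 < s ∧ g s ∈ P := by
  obtain ⟨ε, hε, hsub⟩ := Metric.isOpen_iff.mp (isOpen_interior.preimage hg) 0 h0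
  refine ⟨ε/2, by positivity, interior_subset (hsub ?_)⟩
  simp only [Metric.mem_ball, Real.dist_eq, sub_zero, abs_of_pos (show (0:ℝ) < ε/2 by positivity)]
  linarith

lemma mySNonempty {P : Set Y}
    (hPcone : ∀ c : ℝ, 0 < c → ∀ y ∈ P, c • y ∈ P)
    {q : Y} (hq : q ∈ interior P) (y : Y) :
    {t : ℝ | y - t • q ∈ P}.Nonempty := by
  obtain ⟨s, hs, hmem⟩ := myExistsPos P (g := fun s : ℝ => s • y + q) (by fun_prop) (by simpa)
  refine ⟨-s⁻¹, ?_⟩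
  have h := hPcone s⁻¹ (by positivity) _ hmem
  have heq : s⁻¹ • (s • y + q) = y + s⁻¹ • q := by
    rw [smul_add, smul_smul, inv_mul_cancel₀ hs.ne', one_smul]
  rw [heq] at h
  simpa [sub_eq_add_neg, neg_smul] using h

lemma mySBdd {P : Set Y} (hPclosed : IsClosed P) (hPconv : Convex ℝ P)
    (hPcone : ∀ c : ℝ, 0 < c → ∀ y ∈ P, c • y ∈ P)
    (hPuniv : P ≠ Set.univ) {q : Y} (hq : q ∈ interior P) (y : Y) :
    BddAbove {t : ℝ | y - t • q ∈ P} := by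
  by_contra h
  have hch : ∀ n : ℕ, ∃ t : ℝ, y - t • q ∈ P ∧ ((n:ℝ)+1) ≤ t := by
    intro n
    rcases not_bddAbove_iff.mp h ((n:ℝ)+1) with ⟨t, ht, hlt⟩
    exact ⟨t, ht, hlt.le⟩
  choose t ht hge using hch
  have htpos : ∀ n, 0 < t n := fun n => lt_of_lt_of_le (by positivity) (hge n)
  have hmem : ∀ n, (t n)⁻¹ • y - q ∈ P := by
    intro n
    have h2 := hPcone (t n)⁻¹ (inv_pos.mpr (htpos n)) _ (ht n)
    have heq : (t n)⁻¹ • (y - t n • q) = (t n)⁻¹ • y - q := by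
      rw [smul_sub, smul_smul, inv_mul_cancel₀ (htpos n).ne', one_smul]
    rwa [heq] at h2
  have htt : Tendsto t atTop atTop :=
    tendsto_atTop_mono hge
      (tendsto_atTop_add_const_right atTop 1 tendsto_natCast_atTop_atTop)
  have hinv : Tendsto (fun n => (t n)⁻¹) atTop (nhds 0) := htt.inv_tendsto_atTop
  have hlim : Tendsto (fun n => (t n)⁻¹ • y - q) atTop (nhds (-q)) := by
    have h1 : Tendsto (fun n => (t n)⁻¹ • y) atTop (nhds ((0:ℝ) • y)) := hinv.smul_const y
    have h2 := h1.sub_const q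
    simpa using h2
  have hnq : -q ∈ P := hPclosed.mem_of_tendsto hlim (Filter.Eventually.of_forall hmem)
  have h0 : (0:Y) ∈ interior P := by
    have := myAddInt hPconv hPcone hnq hq
    simpa using this
  apply hPuniv
  ext z
  simp only [Set.mem_univ, iff_true]
  obtain ⟨s, hs, hmem'⟩ := myExistsPos P (g := fun s : ℝ => s • z) (by fun_prop) (by simpa)
  have h2 := hPcone s⁻¹ (by positivity) _ hmem'
  rwa [smul_smul, inv_mul_cancel₀ hs.ne', one_smul] at h2

end helpers


lemma myPsiMem {Y : Type*} [AddCommGroup Y] [Module ℝ Y] [TopologicalSpace Y]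
    [IsTopologicalAddGroup Y] [ContinuousSMul ℝ Y]
    {P : Set Y} (hPclosed : IsClosed P) (hPconv : Convex ℝ P)
    (hPcone : ∀ c : ℝ, 0 < c → ∀ y ∈ P, c • y ∈ P)
    (hPuniv : P ≠ Set.univ) {q : Y} (hq : q ∈ interior P) (y : Y) :
    y - psi P q y • q ∈ P := by
  have hcl : IsClosed {t : ℝ | y - t • q ∈ P} :=
    hPclosed.preimage (by fun_prop : Continuous fun t : ℝ => y - t • q)
  exact hcl.csSup_mem (mySNonempty hPcone hq y) (mySBdd hPclosed hPconv hPcone hPuniv hq y)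

lemma myPsiInt {Y : Type*} [AddCommGroup Y] [Module ℝ Y] [TopologicalSpace Y]
    [IsTopologicalAddGroup Y] [ContinuousSMul ℝ Y]
    {P : Set Y} (hPclosed : IsClosed P) (hPconv : Convex ℝ P)
    (hPcone : ∀ c : ℝ, 0 < c → ∀ y ∈ P, c • y ∈ P)
    (hPuniv : P ≠ Set.univ) {q : Y} (hq : q ∈ interior P) {y : Y} {lam : ℝ}
    (hlt : lam < psi P q y) : y - lam • q ∈ interior P := by
  have h1 : y - psi P q y • q ∈ P := myPsiMem hPclosed hPconv hPcone hPuniv hq y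
  have h2 : (psi P q y - lam) • q ∈ interior P :=
    mySmulInt hPcone (by linarith) hq
  have heq : (y - psi P q y • q) + (psi P q y - lam) • q = y - lam • q := by
    rw [sub_smul]; abel
  have := myAddInt hPconv hPcone h1 h2
  rwa [heq] at this

/-- If `F` is `P`-bounded-valued and `Colev_{<ˡ}(F, λq) = [Ψ_F ≤ λ]` for every `λ ∈ ℝ`,
then `F` satisfies assumption (A). -/
theorem stmt5 {X Y : Type*} [TopologicalSpace X] [T2Space X]
    [AddCommGroup Y] [Module ℝ Y] [TopologicalSpace Y]
    [IsTopologicalAddGroup Y] [ContinuousSMul ℝ Y] [T2Space Y]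
    (P : Set Y) (hPclosed : IsClosed P) (hPconv : Convex ℝ P)
    (hP0 : (0 : Y) ∈ P) (hPcone : ∀ c : ℝ, 0 < c → ∀ y ∈ P, c • y ∈ P)
    (hPne : P ≠ {0}) (hPuniv : P ≠ Set.univ)
    (q : Y) (hq : q ∈ interior P)
    (F : X → Set Y) (hF : ∀ x, (F x).Nonempty)
    (hbdd : ∀ x, PBounded P (F x))
    (hlev : ∀ lam : ℝ, Colev P q F lam = {x : X | PsiF P q F x ≤ (lam : EReal)}) :
    AssumptionA P q F := by
  intro x
  -- lower bound on psi over F x via P-boundedness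
  have hU : {v : Y | q + v ∈ interior P} ∈ nhds (0 : Y) := by
    have hc : Continuous fun v : Y => q + v := by fun_prop
    have h0 : (0 : Y) ∈ (fun v : Y => q + v) ⁻¹' interior P := by simpa using hq
    exact (isOpen_interior.preimage hc).mem_nhds h0
  obtain ⟨r, hr, hsub⟩ := hbdd x _ hU
  have hlowR : ∀ z ∈ F x, -r ≤ psi P q z := by
    intro z hz
    obtain ⟨u, hu, p, hp, rfl⟩ := hsub hz
    obtain ⟨v, hv, rfl⟩ := hu
    have hmem : (r • v + p) - (-r) • q ∈ P := by
      have h1 : q + v ∈ P := interior_subset hv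
      have h2 : r • (q + v) ∈ P := hPcone r hr _ h1
      have h3 : r • (q + v) + p ∈ P := myAddP hPconv hPcone h2 hp
      have heq : r • (q + v) + p = (r • v + p) - (-r) • q := by
        rw [smul_add, neg_smul]; abel
      rwa [heq] at h3
    exact le_csSup (mySBdd hPclosed hPconv hPcone hPuniv hq _) hmem
  obtain ⟨z₀, hz₀⟩ := hF x
  -- PsiF x is a finite real
  have hlb : ((-r : ℝ) : EReal) ≤ PsiF P q F x := by
    refine le_iInf₂ fun z hz => ?_
    exact_mod_cast EReal.coe_le_coe_iff.mpr (hlowR z hz)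
  have hub : PsiF P q F x ≤ ((psi P q z₀ : ℝ) : EReal) := iInf₂_le z₀ hz₀
  have hne_bot : PsiF P q F x ≠ ⊥ := ((EReal.bot_lt_coe (-r)).trans_le hlb).ne'
  have hne_top : PsiF P q F x ≠ ⊤ := (hub.trans_lt (EReal.coe_lt_top _)).ne
  set lam := (PsiF P q F x).toReal with hlam
  have hcoe : ((lam : ℝ) : EReal) = PsiF P q F x := EReal.coe_toReal hne_top hne_bot
  -- x is in the colevel set at height lam
  have hxmem : x ∈ Colev P q F lam := by
    rw [hlev lam]
    exact le_of_eq hcoe.symm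
  obtain ⟨z, hz, hznot⟩ := Set.not_subset.mp hxmem
  refine ⟨z, hz, fun w hw => ?_⟩
  have hzle : psi P q z ≤ lam := by
    by_contra h
    exact hznot (myPsiInt hPclosed hPconv hPcone hPuniv hq (lt_of_not_ge h))
  have hwge : lam ≤ psi P q w := by
    have h1 : PsiF P q F x ≤ ((psi P q w : ℝ) : EReal) := iInf₂_le w hw
    rw [← hcoe] at h1
    exact_mod_cast h1
  linarith
end

section
/- Let X = ℝ^n and Y = ℝ^m with the usual norm topologies. If F is P-closed-valued (F(x) + P is closed for every x) and bounded-valued (F(x) is a bounded subset of ℝ^m for every x), then F satisfies assumption (A). -/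
open Pointwise

/-- If `X = ℝⁿ`, `Y = ℝᵐ`, and `F` is `P`-closed-valued (`F(x) + P` closed) and
bounded-valued, then `F` satisfies assumption (A). -/
theorem stmt6 {n m : ℕ}
    (P : Set (EuclideanSpace ℝ (Fin m))) (hPclosed : IsClosed P) (hPconv : Convex ℝ P)
    (hP0 : (0 : EuclideanSpace ℝ (Fin m)) ∈ P)
    (hPcone : ∀ c : ℝ, 0 < c → ∀ y ∈ P, c • y ∈ P)
    (hPne : P ≠ {0}) (hPuniv : P ≠ Set.univ)
    (q : EuclideanSpace ℝ (Fin m)) (hq : q ∈ interior P)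
    (F : EuclideanSpace ℝ (Fin n) → Set (EuclideanSpace ℝ (Fin m)))
    (hF : ∀ x, (F x).Nonempty)
    (hPcl : ∀ x, IsClosed (F x + P))
    (hbd : ∀ x, Bornology.IsBounded (F x)) :
    AssumptionA P q F := by
  -- P is closed under addition
  have hPP : ∀ p1 ∈ P, ∀ p2 ∈ P, p1 + p2 ∈ P := by
    intro p1 h1 p2 h2
    have h := hPconv h1 h2 (by norm_num : (0:ℝ) ≤ 1/2) (by norm_num : (0:ℝ) ≤ 1/2)
      (by norm_num : (1:ℝ)/2 + 1/2 = 1)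
    have h2' := hPcone 2 (by norm_num) _ h
    have : (2:ℝ) • ((1/2 : ℝ) • p1 + (1/2 : ℝ) • p2) = p1 + p2 := by
      rw [smul_add, smul_smul, smul_smul]
      norm_num
    rwa [this] at h2'
  -- get a ball around q inside P
  obtain ⟨ε, hε, hball⟩ := Metric.isOpen_iff.mp isOpen_interior q hq
  replace hball : Metric.ball q ε ⊆ P := hball.trans interior_subset
  -- the defining sets are nonempty
  have hSne : ∀ y : EuclideanSpace ℝ (Fin m), ∃ t : ℝ, y - t • q ∈ P := by
    intro y
    have hspos : (0:ℝ) < ‖y‖ / ε + 1 := by positivity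
    set s : ℝ := ‖y‖ / ε + 1 with hs
    refine ⟨-s, ?_⟩
    have hmem : q + s⁻¹ • y ∈ Metric.ball q ε := by
      rw [Metric.mem_ball, dist_eq_norm]
      have h1 : q + s⁻¹ • y - q = s⁻¹ • y := by abel
      rw [h1, norm_smul, norm_inv, Real.norm_eq_abs, abs_of_pos hspos]
      rw [inv_mul_lt_iff₀ hspos]
      have : s * ε = ‖y‖ + ε := by rw [hs, add_mul, div_mul_cancel₀ _ hε.ne', one_mul]
      rw [this]; linarith
    have h := hPcone s hspos _ (hball hmem)
    have h2 : s • (q + s⁻¹ • y) = y - (-s) • q := by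
      rw [smul_add, smul_inv_smul₀ hspos.ne', neg_smul, sub_neg_eq_add, add_comm]
    rwa [h2] at h
  -- -q is not in P
  have hnq : -q ∉ P := by
    intro hnqP
    apply hPuniv
    have hball0 : Metric.ball (0:EuclideanSpace ℝ (Fin m)) ε ⊆ P := by
      intro u hu
      have h1 : q + u ∈ Metric.ball q ε := by
        rw [Metric.mem_ball, dist_eq_norm]
        have : q + u - q = u := by abel
        rw [this]
        simpa [dist_eq_norm] using hu
      have h2 := hPP _ (hball h1) _ hnqP
      have : q + u + -q = u := by abel
      rwa [this] at h2
    rw [Set.eq_univ_iff_forall]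
    intro v
    by_cases hv : v = 0
    · rw [hv]; exact hP0
    · have hvn : (0:ℝ) < ‖v‖ := norm_pos_iff.mpr hv
      set c : ℝ := 2 * ‖v‖ / ε with hc
      have hcpos : 0 < c := by positivity
      have hmem : c⁻¹ • v ∈ Metric.ball (0:EuclideanSpace ℝ (Fin m)) ε := by
        rw [Metric.mem_ball, dist_eq_norm, sub_zero, norm_smul, norm_inv,
          Real.norm_eq_abs, abs_of_pos hcpos, inv_mul_lt_iff₀ hcpos]
        have : c * ε = 2 * ‖v‖ := by rw [hc, div_mul_cancel₀ _ hε.ne']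
        rw [this]; linarith
      have := hPcone c hcpos _ (hball0 hmem)
      rwa [smul_inv_smul₀ hcpos.ne'] at this
  -- the defining sets are bounded above
  have hd : 0 < Metric.infDist (-q) P := by
    rcases lt_or_eq_of_le (Metric.infDist_nonneg (s := P) (x := -q)) with h | h
    · exact h
    · exact absurd ((hPclosed.mem_iff_infDist_zero ⟨0, hP0⟩).mpr h.symm) hnq
  set d : ℝ := Metric.infDist (-q) P with hdd
  have hSbdd : ∀ y : EuclideanSpace ℝ (Fin m), BddAbove {t : ℝ | y - t • q ∈ P} := by
    intro y
    refine ⟨max 0 (‖y‖ / d), ?_⟩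
    intro t ht
    rcases le_or_gt t 0 with h | h
    · exact h.trans (le_max_left _ _)
    · have h1 := hPcone t⁻¹ (by positivity) _ ht
      have h2 : t⁻¹ • (y - t • q) = t⁻¹ • y - q := by
        rw [smul_sub, smul_smul, inv_mul_cancel₀ h.ne', one_smul]
      rw [h2] at h1
      have h3 : d ≤ dist (-q) (t⁻¹ • y - q) := Metric.infDist_le_dist_of_mem h1
      have h4 : dist (-q) (t⁻¹ • y - q) = t⁻¹ * ‖y‖ := by
        rw [dist_eq_norm]
        have : -q - (t⁻¹ • y - q) = -(t⁻¹ • y) := by abel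
        rw [this, norm_neg, norm_smul, norm_inv, Real.norm_eq_abs, abs_of_pos h]
      rw [h4] at h3
      have h5 : t * d ≤ ‖y‖ := by
        rw [mul_comm]
        calc d * t ≤ (t⁻¹ * ‖y‖) * t := by nlinarith
          _ = ‖y‖ := by field_simp
      have : t ≤ ‖y‖ / d := (le_div_iff₀ hd).mpr h5
      exact this.trans (le_max_right _ _)
  -- a Lipschitz-type estimate for psi
  have hlip : ∀ y y' : EuclideanSpace ℝ (Fin m), psi P q y ≤ psi P q y' + (2 / ε) * ‖y - y'‖ := by
    intro y y'
    obtain ⟨t0, ht0⟩ := hSne y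
    apply csSup_le ⟨t0, ht0⟩
    intro t ht
    set c : ℝ := (2 / ε) * ‖y - y'‖ with hc
    have hc0 : 0 ≤ c := by positivity
    have key : (y' - y) + c • q ∈ P := by
      rcases eq_or_ne y y' with rfl | hne
      · simpa [hc] using hP0
      · have hnorm : (0:ℝ) < ‖y - y'‖ := norm_pos_iff.mpr (sub_ne_zero.mpr hne)
        have hcpos : 0 < c := by positivity
        have hmem : q + c⁻¹ • (y' - y) ∈ Metric.ball q ε := by
          rw [Metric.mem_ball, dist_eq_norm]
          have h1 : q + c⁻¹ • (y' - y) - q = c⁻¹ • (y' - y) := by abel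
          rw [h1, norm_smul, norm_inv, Real.norm_eq_abs, abs_of_pos hcpos,
            inv_mul_lt_iff₀ hcpos]
          have h2 : ‖y' - y‖ = ‖y - y'‖ := norm_sub_rev _ _
          have h3 : c * ε = 2 * ‖y - y'‖ := by
            rw [hc, mul_comm (2 / ε), mul_assoc, div_mul_cancel₀ _ hε.ne', mul_comm]
          rw [h2, h3]; linarith
        have h := hPcone c hcpos _ (hball hmem)
        have h2 : c • (q + c⁻¹ • (y' - y)) = (y' - y) + c • q := by
          rw [smul_add, smul_inv_smul₀ hcpos.ne', add_comm]
        rwa [h2] at h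
    have hmem' : y' - (t - c) • q ∈ P := by
      have heq : y' - (t - c) • q = (y - t • q) + ((y' - y) + c • q) := by
        rw [sub_smul]; abel
      rw [heq]
      exact hPP _ ht _ key
    have := le_csSup (hSbdd y') hmem'
    have hpsi : t - c ≤ psi P q y' := this
    linarith
  -- psi is continuous
  have hcont : Continuous (psi P q) := by
    have : LipschitzWith (Real.toNNReal (2 / ε)) (psi P q) := by
      apply LipschitzWith.of_dist_le_mul
      intro y y'
      rw [Real.dist_eq, dist_eq_norm, Real.coe_toNNReal _ (by positivity)]
      rw [abs_sub_le_iff]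
      constructor
      · have := hlip y y'; linarith
      · have := hlip y' y
        rw [norm_sub_rev] at this; linarith
    exact this.continuous
  -- psi is monotone along P
  have hmono : ∀ (y : EuclideanSpace ℝ (Fin m)), ∀ p ∈ P, psi P q y ≤ psi P q (y + p) := by
    intro y p hp
    apply csSup_le_csSup (hSbdd _) (hSne y)
    intro t ht
    show (y + p) - t • q ∈ P
    have : (y + p) - t • q = (y - t • q) + p := by abel
    rw [this]
    exact hPP _ ht _ hp
  -- main argument
  intro x
  have hKc : IsCompact (closure (F x)) :=
    Metric.isCompact_of_isClosed_isBounded isClosed_closure (hbd x).closure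
  obtain ⟨zbar, hzbarK, hmin⟩ := hKc.exists_isMinOn (hF x).closure hcont.continuousOn
  have hsub : F x ⊆ F x + P := fun y hy => by
    simpa using Set.add_mem_add hy hP0
  have hzbarFP : zbar ∈ F x + P :=
    (hPcl x).closure_subset ((closure_mono hsub) hzbarK)
  obtain ⟨z, hzF, p, hpP, hzp⟩ := Set.mem_add.mp hzbarFP
  refine ⟨z, hzF, fun w hw => ?_⟩
  calc psi P q z ≤ psi P q (z + p) := hmono z p hpP
    _ = psi P q zbar := by rw [hzp]
    _ ≤ psi P q w := isMinOn_iff.mp hmin w (subset_closure hw)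
end

section
/- F is q-srgi if and only if the set-valued map λ ↦ Colev_{<^l}(F, λq) is transfer closed on (M_F^q, +∞), i.e., ⋂_{λ > M_F^q} cl(Colev_{<^l}(F, λq)) = ⋂_{λ > M_F^q} Colev_{<^l}(F, λq), where the intersections range over real λ with λ > M_F^q. -/
open Pointwise

/-- `M_F^q = sup {t ∈ ℝ : F(X) ⊆ t • q + P} ∈ ℝ ∪ {±∞}` (with `sup ∅ = -∞`). -/
noncomputable def Mq {X Y : Type*} [AddCommGroup Y] [Module ℝ Y]
    (P : Set Y) (q : Y) (F : X → Set Y) : EReal :=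
  sSup ((fun t : ℝ => (t : EReal)) '' {t : ℝ | ∀ x : X, ∀ z ∈ F x, z - t • q ∈ P})

/-- `F` is `q`-srgi: if `λ > M_F^q` and `x₀ ∉ Colev_{<ˡ}(F, λq)`, then there exist a
neighborhood `U` of `x₀` and a real `r > M_F^q` with `U ∩ Colev_{<ˡ}(F, rq) = ∅`. -/
def Srgi {X Y : Type*} [TopologicalSpace X] [AddCommGroup Y] [Module ℝ Y] [TopologicalSpace Y]
    (P : Set Y) (q : Y) (F : X → Set Y) : Prop :=
  ∀ lam : ℝ, Mq P q F < (lam : EReal) → ∀ x₀ : X, x₀ ∉ Colev P q F lam →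
    ∃ U ∈ nhds x₀, ∃ r : ℝ, Mq P q F < (r : EReal) ∧ U ∩ Colev P q F r = ∅

/-- `F` is `q`-srgi iff `λ ↦ Colev_{<ˡ}(F, λq)` is transfer closed on `(M_F^q, +∞)`. -/
theorem stmt9 {X Y : Type*} [TopologicalSpace X] [T2Space X]
    [AddCommGroup Y] [Module ℝ Y] [TopologicalSpace Y]
    [IsTopologicalAddGroup Y] [ContinuousSMul ℝ Y] [T2Space Y]
    (P : Set Y) (hPclosed : IsClosed P) (hPconv : Convex ℝ P)
    (hP0 : (0 : Y) ∈ P) (hPcone : ∀ c : ℝ, 0 < c → ∀ y ∈ P, c • y ∈ P)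
    (hPne : P ≠ {0}) (hPuniv : P ≠ Set.univ)
    (q : Y) (hq : q ∈ interior P)
    (F : X → Set Y) (hF : ∀ x, (F x).Nonempty) :
    Srgi P q F ↔
      ⋂ lam ∈ {l : ℝ | Mq P q F < (l : EReal)}, closure (Colev P q F lam) =
        ⋂ lam ∈ {l : ℝ | Mq P q F < (l : EReal)}, Colev P q F lam := by
  constructor
  · intro h
    apply Set.Subset.antisymm
    · intro x hx
      simp only [Set.mem_iInter] at hx ⊢
      intro lam hlam
      by_contra hxn
      obtain ⟨U, hU, r, hr, hdis⟩ := h lam hlam x hxn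
      have hxr := hx r hr
      rcases mem_closure_iff_nhds.mp hxr U hU with ⟨y, hyU, hyS⟩
      have : y ∈ U ∩ Colev P q F r := ⟨hyU, hyS⟩
      rw [hdis] at this
      exact this
    · exact Set.iInter₂_mono fun lam _ => subset_closure
  · intro h lam hlam x₀ hx₀
    have hx' : x₀ ∉ ⋂ l ∈ {l : ℝ | Mq P q F < (l : EReal)}, Colev P q F l := by
      simp only [Set.mem_iInter]
      push_neg
      exact ⟨lam, hlam, hx₀⟩
    rw [← h] at hx'
    simp only [Set.mem_iInter] at hx'
    push_neg at hx'
    obtain ⟨r, hr, hxr⟩ := hx'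
    exact ⟨(closure (Colev P q F r))ᶜ, isClosed_closure.isOpen_compl.mem_nhds hxr,
      r, hr, Set.eq_empty_of_forall_notMem fun y ⟨hy1, hy2⟩ => hy1 (subset_closure hy2)⟩
end

section
/- Suppose F satisfies assumption (A) and there exists x₀ ∈ X such that Colev_{<^l}(F, F(x₀)) is relatively compact (its closure in X is compact). Then x₀ ∈ l-SWEff(F) or F satisfies q-sgicc. -/
open Pointwise

/-- The colevel set of `F` at height `B ⊆ Y`: `{x : F(x) ⊄ B + int P}`. -/
def ColevB {X Y : Type*} [AddCommGroup Y] [Module ℝ Y] [TopologicalSpace Y]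
    (P : Set Y) (F : X → Set Y) (B : Set Y) : Set X :=
  {x | ¬ F x ⊆ B + interior P}

/-- `x̄` is a strict weakly `l`-efficient solution of (SOP). -/
def SWEff {X Y : Type*} [AddCommGroup Y] [Module ℝ Y] [TopologicalSpace Y]
    (P : Set Y) (F : X → Set Y) (xbar : X) : Prop :=
  ¬ ∃ x : X, x ≠ xbar ∧ F xbar ⊆ F x + interior P

/-- `F` satisfies `q`-sgicc: there is a real `λ > M_F^q` such that `Colev_{<ˡ}(F, λq)`
is relatively compact. -/
def Sgicc {X Y : Type*} [TopologicalSpace X] [AddCommGroup Y] [Module ℝ Y] [TopologicalSpace Y]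
    (P : Set Y) (q : Y) (F : X → Set Y) : Prop :=
  ∃ lam : ℝ, Mq P q F < (lam : EReal) ∧ IsCompact (closure (Colev P q F lam))


namespace StmtAux

variable {Y : Type*} [AddCommGroup Y] [Module ℝ Y] [TopologicalSpace Y]
  [IsTopologicalAddGroup Y] [ContinuousSMul ℝ Y]
  {P : Set Y} {q : Y}

lemma P_add (hPconv : Convex ℝ P) (hPcone : ∀ c : ℝ, 0 < c → ∀ y ∈ P, c • y ∈ P)
    {a b : Y} (ha : a ∈ P) (hb : b ∈ P) : a + b ∈ P := by
  have h := hPconv ha hb (by norm_num : (0:ℝ) ≤ 1/2) (by norm_num : (0:ℝ) ≤ 1/2) (by norm_num)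
  have h2 := hPcone 2 (by norm_num) _ h
  have he : (2:ℝ) • ((1/2:ℝ) • a + (1/2:ℝ) • b) = a + b := by module
  rwa [he] at h2

lemma add_int_mem (hPconv : Convex ℝ P) (hPcone : ∀ c : ℝ, 0 < c → ∀ y ∈ P, c • y ∈ P)
    {a b : Y} (ha : a ∈ P) (hb : b ∈ interior P) : a + b ∈ interior P := by
  have hU : IsOpen ((Homeomorph.addLeft a) '' interior P) :=
    (Homeomorph.addLeft a).isOpenMap _ isOpen_interior
  have hsub : ((Homeomorph.addLeft a) '' interior P) ⊆ P := by
    rintro _ ⟨p, hp, rfl⟩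
    exact P_add hPconv hPcone ha (interior_subset hp)
  exact interior_maximal hsub hU ⟨b, hb, rfl⟩

lemma smul_mem_int (hPcone : ∀ c : ℝ, 0 < c → ∀ y ∈ P, c • y ∈ P)
    (hq : q ∈ interior P) {c : ℝ} (hc : 0 < c) : c • q ∈ interior P := by
  have hU : IsOpen ((Homeomorph.smulOfNeZero c hc.ne') '' interior P) :=
    (Homeomorph.smulOfNeZero c hc.ne').isOpenMap _ isOpen_interior
  have hsub : ((Homeomorph.smulOfNeZero c hc.ne') '' interior P) ⊆ P := by
    rintro _ ⟨p, hp, rfl⟩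
    exact hPcone c hc _ (interior_subset hp)
  exact interior_maximal hsub hU ⟨q, hq, rfl⟩

lemma negq_not_mem (hPconv : Convex ℝ P) (hPcone : ∀ c : ℝ, 0 < c → ∀ y ∈ P, c • y ∈ P)
    (hPuniv : P ≠ Set.univ) (hq : q ∈ interior P) : -q ∉ P := by
  intro h
  have h0 : (0:Y) ∈ interior P := by
    have := add_int_mem hPconv hPcone h hq
    rwa [neg_add_cancel] at this
  apply hPuniv
  ext y
  simp only [Set.mem_univ, iff_true]
  have htend : Filter.Tendsto (fun c : ℝ => c • y) (nhds 0) (nhds (0:Y)) := by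
    have := Filter.Tendsto.smul_const (Filter.tendsto_id : Filter.Tendsto id (nhds (0:ℝ)) (nhds 0)) y
    simpa using this
  have hev : ∀ᶠ c : ℝ in nhds 0, c • y ∈ interior P :=
    htend.eventually (isOpen_interior.mem_nhds h0)
  have hev' : ∀ᶠ c : ℝ in nhdsWithin 0 (Set.Ioi 0), c • y ∈ interior P :=
    hev.filter_mono nhdsWithin_le_nhds
  obtain ⟨c, hcy, hc⟩ := (hev'.and eventually_mem_nhdsWithin).exists
  have hc' : (0:ℝ) < c := hc
  have : c⁻¹ • (c • y) ∈ P := hPcone c⁻¹ (inv_pos.2 hc') _ (interior_subset hcy)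
  rwa [smul_smul, inv_mul_cancel₀ hc'.ne', one_smul] at this

lemma setS_nonempty (hPcone : ∀ c : ℝ, 0 < c → ∀ y ∈ P, c • y ∈ P)
    (hq : q ∈ interior P) (y : Y) : {t : ℝ | y - t • q ∈ P}.Nonempty := by
  have htend : Filter.Tendsto (fun c : ℝ => c • y + q) (nhds 0) (nhds q) := by
    have := (Filter.Tendsto.smul_const (Filter.tendsto_id : Filter.Tendsto id (nhds (0:ℝ)) (nhds 0)) y).add_const q
    simpa using this
  have hev : ∀ᶠ c : ℝ in nhds 0, c • y + q ∈ interior P :=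
    htend.eventually (isOpen_interior.mem_nhds hq)
  have hev' : ∀ᶠ c : ℝ in nhdsWithin 0 (Set.Ioi 0), c • y + q ∈ interior P :=
    hev.filter_mono nhdsWithin_le_nhds
  obtain ⟨c, hcy, hc⟩ := (hev'.and eventually_mem_nhdsWithin).exists
  have hc' : (0:ℝ) < c := hc
  refine ⟨-(c⁻¹), ?_⟩
  have hm : c⁻¹ • (c • y + q) ∈ P := hPcone c⁻¹ (inv_pos.2 hc') _ (interior_subset hcy)
  have he : c⁻¹ • (c • y + q) = y - (-(c⁻¹)) • q := by
    rw [smul_add, smul_smul, inv_mul_cancel₀ hc'.ne', one_smul, neg_smul, sub_neg_eq_add]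
  rwa [he] at hm

lemma setS_bddAbove (hPclosed : IsClosed P) (hPconv : Convex ℝ P)
    (hPcone : ∀ c : ℝ, 0 < c → ∀ y ∈ P, c • y ∈ P)
    (hPuniv : P ≠ Set.univ) (hq : q ∈ interior P) (y : Y) :
    BddAbove {t : ℝ | y - t • q ∈ P} := by
  by_contra h
  rw [not_bddAbove_iff] at h
  choose t hmem hlt using fun n : ℕ => h n
  have htop : Filter.Tendsto t Filter.atTop Filter.atTop :=
    Filter.tendsto_atTop_mono (fun n => (hlt n).le) tendsto_natCast_atTop_atTop
  have hpos : ∀ n, 0 < t n := fun n => lt_of_le_of_lt (Nat.cast_nonneg n) (hlt n)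
  have hinv : Filter.Tendsto (fun n => (t n)⁻¹) Filter.atTop (nhds 0) :=
    htop.inv_tendsto_atTop
  have htend : Filter.Tendsto (fun n => (t n)⁻¹ • y - q) Filter.atTop (nhds (-q)) := by
    have := (hinv.smul_const y).sub_const q
    simpa using this
  have hmem' : ∀ n, (t n)⁻¹ • y - q ∈ P := by
    intro n
    have := hPcone (t n)⁻¹ (inv_pos.2 (hpos n)) _ (hmem n)
    have he : (t n)⁻¹ • (y - t n • q) = (t n)⁻¹ • y - q := by
      rw [smul_sub, smul_smul, inv_mul_cancel₀ (hpos n).ne', one_smul]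
    rwa [he] at this
  exact negq_not_mem hPconv hPcone hPuniv hq
    (hPclosed.mem_of_tendsto htend (Filter.Eventually.of_forall hmem'))

lemma setS_isClosed (hPclosed : IsClosed P) (y : Y) :
    IsClosed {t : ℝ | y - t • q ∈ P} := by
  have : Continuous fun t : ℝ => y - t • q :=
    continuous_const.sub (continuous_id.smul continuous_const)
  exact hPclosed.preimage this

lemma psi_ge (hPclosed : IsClosed P) (hPconv : Convex ℝ P)
    (hP0 : (0:Y) ∈ P) (hPcone : ∀ c : ℝ, 0 < c → ∀ y ∈ P, c • y ∈ P)
    (hPuniv : P ≠ Set.univ) (hq : q ∈ interior P) {y : Y} {t : ℝ} :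
    t ≤ psi P q y ↔ y - t • q ∈ P := by
  constructor
  · intro ht
    have hcl := setS_isClosed (q := q) hPclosed y
    have hmem : psi P q y ∈ {t : ℝ | y - t • q ∈ P} :=
      hcl.csSup_mem (setS_nonempty hPcone hq y) (setS_bddAbove hPclosed hPconv hPcone hPuniv hq y)
    have hdq : (psi P q y - t) • q ∈ P := by
      rcases eq_or_lt_of_le ht with h | h
      · rw [← h]; simpa using hP0
      · exact hPcone _ (sub_pos.2 h) _ (interior_subset hq)
    have he : (y - psi P q y • q) + (psi P q y - t) • q = y - t • q := by module
    rw [← he]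
    exact P_add hPconv hPcone hmem hdq
  · intro hm
    exact le_csSup (setS_bddAbove hPclosed hPconv hPcone hPuniv hq y) hm

lemma psi_gt (hPclosed : IsClosed P) (hPconv : Convex ℝ P)
    (hP0 : (0:Y) ∈ P) (hPcone : ∀ c : ℝ, 0 < c → ∀ y ∈ P, c • y ∈ P)
    (hPuniv : P ≠ Set.univ) (hq : q ∈ interior P) {y : Y} {t : ℝ} :
    t < psi P q y ↔ y - t • q ∈ interior P := by
  constructor
  · intro ht
    obtain ⟨s, hs, hts⟩ := exists_lt_of_lt_csSup (setS_nonempty hPcone hq y) ht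
    have h1 : (s - t) • q ∈ interior P := smul_mem_int hPcone hq (sub_pos.2 hts)
    have he : (y - s • q) + (s - t) • q = y - t • q := by module
    rw [← he]
    exact add_int_mem hPconv hPcone hs h1
  · intro hm
    have htend : Filter.Tendsto (fun s : ℝ => y - s • q) (nhds t) (nhds (y - t • q)) :=
      (continuous_const.sub (continuous_id.smul continuous_const)).continuousAt
    have hev : ∀ᶠ s : ℝ in nhds t, y - s • q ∈ interior P :=
      htend.eventually (isOpen_interior.mem_nhds hm)
    have hev' : ∀ᶠ s : ℝ in nhdsWithin t (Set.Ioi t), y - s • q ∈ interior P :=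
      hev.filter_mono nhdsWithin_le_nhds
    obtain ⟨s, hsy, hs⟩ := (hev'.and eventually_mem_nhdsWithin).exists
    have : s ≤ psi P q y :=
      (psi_ge hPclosed hPconv hP0 hPcone hPuniv hq).2 (interior_subset hsy)
    exact lt_of_lt_of_le hs this

lemma psi_superadd (hPclosed : IsClosed P) (hPconv : Convex ℝ P)
    (hP0 : (0:Y) ∈ P) (hPcone : ∀ c : ℝ, 0 < c → ∀ y ∈ P, c • y ∈ P)
    (hPuniv : P ≠ Set.univ) (hq : q ∈ interior P) (a b : Y) :
    psi P q a + psi P q b ≤ psi P q (a + b) := by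
  have ha : a - psi P q a • q ∈ P := (psi_ge hPclosed hPconv hP0 hPcone hPuniv hq).1 le_rfl
  have hb : b - psi P q b • q ∈ P := (psi_ge hPclosed hPconv hP0 hPcone hPuniv hq).1 le_rfl
  have he : (a - psi P q a • q) + (b - psi P q b • q) = (a + b) - (psi P q a + psi P q b) • q := by
    module
  refine (psi_ge hPclosed hPconv hP0 hPcone hPuniv hq).2 ?_
  rw [← he]
  exact P_add hPconv hPcone ha hb

end StmtAux

/-- If `F` satisfies assumption (A) and `Colev_{<ˡ}(F, F(x₀))` is relatively compact,
then `x₀ ∈ l-SWEff(F)` or `F` satisfies `q`-sgicc. -/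
theorem stmt13 {X Y : Type*} [TopologicalSpace X] [T2Space X]
    [AddCommGroup Y] [Module ℝ Y] [TopologicalSpace Y]
    [IsTopologicalAddGroup Y] [ContinuousSMul ℝ Y] [T2Space Y]
    (P : Set Y) (hPclosed : IsClosed P) (hPconv : Convex ℝ P)
    (hP0 : (0 : Y) ∈ P) (hPcone : ∀ c : ℝ, 0 < c → ∀ y ∈ P, c • y ∈ P)
    (hPne : P ≠ {0}) (hPuniv : P ≠ Set.univ)
    (q : Y) (hq : q ∈ interior P)
    (F : X → Set Y) (hF : ∀ x, (F x).Nonempty)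
    (hA : AssumptionA P q F)
    (x₀ : X) (hcpt : IsCompact (closure (ColevB P F (F x₀)))) :
    SWEff P F x₀ ∨ Sgicc P q F := by
  by_cases hsw : SWEff P F x₀
  · exact Or.inl hsw
  right
  rw [SWEff, not_not] at hsw
  obtain ⟨x₁, hx₁ne, hsub⟩ := hsw
  obtain ⟨z₁, hz₁, hmin₁⟩ := hA x₁
  obtain ⟨z₀, hz₀, hmin₀⟩ := hA x₀
  have hpge : ∀ {y : Y} {t : ℝ}, t ≤ psi P q y ↔ y - t • q ∈ P :=
    fun {y t} => StmtAux.psi_ge hPclosed hPconv hP0 hPcone hPuniv hq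
  have hpgt : ∀ {y : Y} {t : ℝ}, t < psi P q y ↔ y - t • q ∈ interior P :=
    fun {y t} => StmtAux.psi_gt hPclosed hPconv hP0 hPcone hPuniv hq
  have hsup : ∀ a b : Y, psi P q a + psi P q b ≤ psi P q (a + b) :=
    StmtAux.psi_superadd hPclosed hPconv hP0 hPcone hPuniv hq
  set m₁ := psi P q z₁ with hm₁
  set m₀ := psi P q z₀ with hm₀
  -- m₁ < m₀
  have hlt : m₁ < m₀ := by
    obtain ⟨w, hw, p, hp, hwp⟩ := Set.mem_add.1 (hsub hz₀)
    have hppos : 0 < psi P q p := by rw [hpgt]; simpa using hp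
    have h1 : psi P q w + psi P q p ≤ psi P q z₀ := by rw [← hwp]; exact hsup w p
    have h2 : m₁ ≤ psi P q w := hmin₁ w hw
    have : m₀ = psi P q z₀ := hm₀
    linarith
  set lam : ℝ := (m₀ + m₁) / 2 with hlam
  have hlam1 : m₁ < lam := by rw [hlam]; linarith
  have hlam0 : lam < m₀ := by rw [hlam]; linarith
  refine ⟨lam, ?_, ?_⟩
  · -- Mq < lam
    have hle : Mq P q F ≤ (m₁ : EReal) := by
      apply sSup_le
      rintro _ ⟨t, ht, rfl⟩
      exact EReal.coe_le_coe_iff.2 (hpge.2 (ht x₁ z₁ hz₁))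
    exact lt_of_le_of_lt hle (EReal.coe_lt_coe_iff.2 hlam1)
  · -- compactness
    have hss : Colev P q F lam ⊆ ColevB P F (F x₀) := by
      intro x hx
      obtain ⟨z, hz, hznot⟩ := Set.not_subset.1 hx
      have hzle : psi P q z ≤ lam := not_lt.1 fun h => hznot (hpgt.1 h)
      intro hcon
      obtain ⟨w, hw, p, hp, hwp⟩ := Set.mem_add.1 (hcon hz)
      have hppos : 0 < psi P q p := by rw [hpgt]; simpa using hp
      have h1 : psi P q w + psi P q p ≤ psi P q z := by rw [← hwp]; exact hsup w p
      have h2 : m₀ ≤ psi P q w := hmin₀ w hw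
      linarith
    exact hcpt.of_isClosed_subset isClosed_closure (closure_mono hss)
end

section
/- Let F be a q-srgi map that satisfies assumption (A) and q-sgicc. If F(X) is P-bounded, then l-SWEff(F) is nonempty. -/
open Pointwise

/-- If `F` is `q`-srgi, satisfies assumption (A) and `q`-sgicc, and `F(X)` is
`P`-bounded, then `l-SWEff(F)` is nonempty. -/
theorem stmt14 {X Y : Type*} [TopologicalSpace X] [T2Space X]
    [AddCommGroup Y] [Module ℝ Y] [TopologicalSpace Y]
    [IsTopologicalAddGroup Y] [ContinuousSMul ℝ Y] [T2Space Y]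
    (P : Set Y) (hPclosed : IsClosed P) (hPconv : Convex ℝ P)
    (hP0 : (0 : Y) ∈ P) (hPcone : ∀ c : ℝ, 0 < c → ∀ y ∈ P, c • y ∈ P)
    (hPne : P ≠ {0}) (hPuniv : P ≠ Set.univ)
    (q : Y) (hq : q ∈ interior P)
    (F : X → Set Y) (hF : ∀ x, (F x).Nonempty)
    (hsrgi : Srgi P q F) (hA : AssumptionA P q F) (hcoer : Sgicc P q F)
    (hbdd : PBounded P (⋃ x : X, F x)) :
    ∃ xbar : X, SWEff P F xbar := by

  classical
  -- basic cone facts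
  have hqP : q ∈ P := interior_subset hq
  have hPadd : ∀ a ∈ P, ∀ b ∈ P, a + b ∈ P := by
    intro a ha b hb
    have h := hPconv ha hb (by norm_num : (0:ℝ) ≤ 1/2) (by norm_num : (0:ℝ) ≤ 1/2) (by norm_num)
    have h2 := hPcone 2 (by norm_num) _ h
    have heq : (2:ℝ) • ((1/2:ℝ) • a + (1/2:ℝ) • b) = a + b := by module
    rwa [heq] at h2
  have hintadd : ∀ p ∈ interior P, ∀ b ∈ P, p + b ∈ interior P := by
    intro p hp b hb
    have hopen : IsOpen (interior P + P) := IsOpen.add_right isOpen_interior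
    have hsub : interior P + P ⊆ P := by
      rintro y ⟨u, hu, v, hv, rfl⟩
      exact hPadd u (interior_subset hu) v hv
    exact interior_maximal hsub hopen (Set.add_mem_add hp hb)
  have hcq : ∀ c : ℝ, 0 < c → c • q ∈ interior P := by
    intro c hc
    have hopen : IsOpen {y : Y | c⁻¹ • y ∈ interior P} :=
      isOpen_interior.preimage (continuous_const_smul _)
    have hsub : {y : Y | c⁻¹ • y ∈ interior P} ⊆ P := by
      intro y hy
      have := hPcone c hc _ (interior_subset hy)
      rwa [smul_inv_smul₀ (ne_of_gt hc)] at this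
    refine interior_maximal hsub hopen ?_
    show c⁻¹ • (c • q) ∈ interior P
    rwa [inv_smul_smul₀ (ne_of_gt hc)]
  have heps : ∀ p ∈ interior P, ∃ ε : ℝ, 0 < ε ∧ p - ε • q ∈ P := by
    intro p hp
    have hten : Filter.Tendsto (fun ε : ℝ => p - ε • q) (nhds 0) (nhds p) := by
      have h0 : Filter.Tendsto (fun ε : ℝ => p - ε • q) (nhds 0) (nhds (p - (0:ℝ) • q)) :=
        Filter.Tendsto.sub tendsto_const_nhds ((continuous_id.smul continuous_const).tendsto 0)
      simpa using h0
    have hev : ∀ᶠ ε : ℝ in nhds 0, p - ε • q ∈ interior P :=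
      hten.eventually (isOpen_interior.mem_nhds hp)
    have hev' : ∀ᶠ ε : ℝ in nhdsWithin 0 (Set.Ioi 0), p - ε • q ∈ interior P :=
      hev.filter_mono nhdsWithin_le_nhds
    obtain ⟨ε, hmem, hε⟩ := (hev'.and self_mem_nhdsWithin).exists
    exact ⟨ε, hε, interior_subset hmem⟩
  -- boundedness above of the scalarization sets
  have hbddA : ∀ z : Y, BddAbove {t : ℝ | z - t • q ∈ P} := by
    intro z
    by_contra hub
    rw [not_bddAbove_iff] at hub
    choose f hfmem hfgt using hub
    have hfpos : ∀ n : ℕ, (0:ℝ) < f (n:ℝ) :=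
      fun n => lt_of_le_of_lt (Nat.cast_nonneg n) (hfgt (n:ℝ))
    have hmem2 : ∀ n : ℕ, (f (n:ℝ))⁻¹ • z - q ∈ P := by
      intro n
      have h := hPcone (f (n:ℝ))⁻¹ (inv_pos.mpr (hfpos n)) _ (hfmem (n:ℝ))
      have heq : (f (n:ℝ))⁻¹ • (z - f (n:ℝ) • q) = (f (n:ℝ))⁻¹ • z - q := by
        rw [smul_sub, smul_smul, inv_mul_cancel₀ (ne_of_gt (hfpos n)), one_smul]
      rwa [heq] at h
    have hlim : Filter.Tendsto (fun n : ℕ => (f (n:ℝ))⁻¹ • z - q) Filter.atTop (nhds (-q)) := by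
      have hmono : ∀ n : ℕ, ((n : ℝ)) ≤ f (n : ℝ) := fun n => le_of_lt (hfgt (n : ℝ))
      have h1 : Filter.Tendsto (fun n : ℕ => f (n : ℝ)) Filter.atTop Filter.atTop :=
        Filter.tendsto_atTop_mono hmono tendsto_natCast_atTop_atTop
      have h2 : Filter.Tendsto (fun n : ℕ => (f (n : ℝ))⁻¹) Filter.atTop (nhds 0) :=
        h1.inv_tendsto_atTop
      have h3 : Filter.Tendsto (fun n : ℕ => (f (n:ℝ))⁻¹ • z) Filter.atTop (nhds ((0:ℝ) • z)) :=
        h2.smul_const z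
      rw [zero_smul] at h3
      simpa using h3.sub_const q
    have hnegq : -q ∈ P := hPclosed.mem_of_tendsto hlim (Filter.Eventually.of_forall hmem2)
    have h0int : (0 : Y) ∈ interior P := by
      have := hintadd q hq (-q) hnegq
      simpa using this
    apply hPuniv
    rw [Set.eq_univ_iff_forall]
    intro y
    have hten : Filter.Tendsto (fun ε : ℝ => ε • y) (nhdsWithin 0 (Set.Ioi 0)) (nhds 0) := by
      have h0 : Filter.Tendsto (fun ε : ℝ => ε • y) (nhds 0) (nhds ((0:ℝ) • y)) :=
        (continuous_id.smul continuous_const).tendsto 0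
      rw [zero_smul] at h0
      exact h0.mono_left nhdsWithin_le_nhds
    have hev : ∀ᶠ ε : ℝ in nhdsWithin 0 (Set.Ioi 0), ε • y ∈ interior P :=
      hten.eventually (isOpen_interior.mem_nhds h0int)
    obtain ⟨ε, hmem, hε⟩ := (hev.and self_mem_nhdsWithin).exists
    have := hPcone ε⁻¹ (inv_pos.mpr hε) _ (interior_subset hmem)
    rwa [inv_smul_smul₀ (ne_of_gt hε)] at this
  -- uniform lower bound from P-boundedness
  have hV : {u : Y | q + u ∈ P} ∈ nhds (0 : Y) := by
    have hc : ContinuousAt (fun u : Y => q + u) 0 :=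
      (continuous_const.add continuous_id).continuousAt
    have hpre : (fun u : Y => q + u) ⁻¹' interior P ∈ nhds (0:Y) := by
      apply hc.preimage_mem_nhds
      simpa using isOpen_interior.mem_nhds hq
    exact Filter.mem_of_superset hpre (fun u hu => (interior_subset hu : q + u ∈ P))
  obtain ⟨r, hrpos, hrsub⟩ := hbdd _ hV
  have hlow : ∀ x : X, ∀ z ∈ F x, z - (-r : ℝ) • q ∈ P := by
    intro x z hz
    have hz' : z ∈ r • {u : Y | q + u ∈ P} + P := hrsub (Set.mem_iUnion.mpr ⟨x, hz⟩)
    obtain ⟨a, ha, b, hb, hab⟩ := hz'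
    obtain ⟨v, hv, rfl⟩ := ha
    have heq : z - (-r : ℝ) • q = r • (q + v) + b := by rw [← hab]; module
    rw [heq]
    exact hPadd _ (hPcone r hrpos _ hv) _ hb
  -- choose minimizers
  choose zsel hzmem hzmin using hA
  set m : X → ℝ := fun x => psi P q (zsel x) with hmdef
  have hSne : ∀ x : X, ∀ z ∈ F x, ({t : ℝ | z - t • q ∈ P}).Nonempty :=
    fun x z hz => ⟨-r, hlow x z hz⟩
  have hScl : ∀ z : Y, IsClosed {t : ℝ | z - t • q ∈ P} := by
    intro z
    have hc : Continuous (fun t : ℝ => z - t • q) :=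
      continuous_const.sub (continuous_id.smul continuous_const)
    exact hPclosed.preimage hc
  have hpsimem : ∀ x : X, ∀ z ∈ F x, z - (psi P q z) • q ∈ P :=
    fun x z hz => (hScl z).csSup_mem (hSne x z hz) (hbddA z)
  have hle_psi : ∀ (z : Y) (t : ℝ), z - t • q ∈ P → t ≤ psi P q z :=
    fun z t h => le_csSup (hbddA z) h
  have hpsi_le : ∀ x : X, ∀ z ∈ F x, ∀ t : ℝ, t ≤ psi P q z → z - t • q ∈ P := by
    intro x z hz t ht
    have h1 : z - (psi P q z) • q ∈ P := hpsimem x z hz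
    have heq : z - t • q = (psi P q z - t) • q + (z - (psi P q z) • q) := by module
    rw [heq]
    rcases lt_or_eq_of_le ht with h | h
    · exact hPadd _ (interior_subset (hcq _ (by linarith))) _ h1
    · rw [h]; simpa using h1
  -- characterization of colevel sets
  have hColev : ∀ (lam : ℝ) (x : X), x ∈ Colev P q F lam ↔ m x ≤ lam := by
    intro lam x
    simp only [Colev, Set.mem_setOf_eq]
    constructor
    · intro hx
      by_contra hlt
      push_neg at hlt
      apply hx
      intro w hw
      simp only [Set.mem_setOf_eq]
      have hpw : lam < psi P q w := lt_of_lt_of_le hlt (hzmin x w hw)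
      have h1 : (psi P q w - lam) • q ∈ interior P := hcq _ (by linarith)
      have h2 : w - (psi P q w) • q ∈ P := hpsimem x w hw
      have heq : w - lam • q = (psi P q w - lam) • q + (w - (psi P q w) • q) := by module
      rw [heq]
      exact hintadd _ h1 _ h2
    · intro hmx hsubset
      have hz : zsel x - lam • q ∈ interior P := hsubset (hzmem x)
      obtain ⟨ε, hε, hεP⟩ := heps _ hz
      have hmem : zsel x - (lam + ε) • q ∈ P := by
        have heq : zsel x - (lam + ε) • q = (zsel x - lam • q) - ε • q := by module
        rw [heq]; exact hεP
      have := hle_psi (zsel x) (lam + ε) hmem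
      have hmx' : m x = psi P q (zsel x) := rfl
      rw [hmx'] at hmx
      linarith
  -- the infimum
  obtain ⟨lam0, hlam0, hK⟩ := hcoer
  have hXne : Nonempty X := by
    by_contra hX
    rw [not_nonempty_iff] at hX
    have hmem : (lam0 + 1 : ℝ) ∈ {t : ℝ | ∀ x : X, ∀ z ∈ F x, z - t • q ∈ P} :=
      fun x => (hX.elim x)
    have hle : ((lam0 + 1 : ℝ) : EReal) ≤ Mq P q F := le_sSup ⟨_, hmem, rfl⟩
    have := lt_of_le_of_lt hle hlam0
    rw [EReal.coe_lt_coe_iff] at this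
    linarith
  have hmlb : ∀ x : X, -r ≤ m x := fun x => hle_psi (zsel x) (-r) (hlow x _ (hzmem x))
  have hrange_ne : (Set.range m).Nonempty := Set.range_nonempty m
  have hμbdd : BddBelow (Set.range m) := ⟨-r, by rintro a ⟨x, rfl⟩; exact hmlb x⟩
  set μ : ℝ := sInf (Set.range m) with hμdef
  have hMq : ∀ lam : ℝ, Mq P q F < (lam : EReal) ↔ μ < lam := by
    intro lam
    constructor
    · intro h
      by_contra hcon
      push_neg at hcon
      have hmem : lam ∈ {t : ℝ | ∀ x : X, ∀ z ∈ F x, z - t • q ∈ P} := by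
        intro x z hz
        have h1 : μ ≤ m x := csInf_le hμbdd ⟨x, rfl⟩
        have h2 : m x ≤ psi P q z := hzmin x z hz
        exact hpsi_le x z hz lam (by linarith)
      have hle : ((lam : ℝ) : EReal) ≤ Mq P q F := le_sSup ⟨_, hmem, rfl⟩
      exact absurd h (not_lt.mpr hle)
    · intro h
      obtain ⟨a, ⟨x, rfl⟩, hax⟩ := exists_lt_of_csInf_lt hrange_ne h
      have hle : Mq P q F ≤ ((m x : ℝ) : EReal) := by
        apply sSup_le
        rintro a ⟨t, ht, rfl⟩
        have ht2 : t ≤ m x := hle_psi _ t (ht x (zsel x) (hzmem x))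
        exact EReal.coe_le_coe_iff.mpr ht2
      exact lt_of_le_of_lt hle (EReal.coe_lt_coe_iff.mpr hax)
  -- existence of a minimizer of m
  have hminex : ∃ xbar : X, ∀ x : X, m xbar ≤ m x := by
    by_contra hno
    push_neg at hno
    set K := closure (Colev P q F lam0) with hKdef
    have key : ∀ x : X, ∃ U : Set X, U ∈ nhds x ∧
        (x ∈ K → ∃ ρ : ℝ, μ < ρ ∧ ∀ y ∈ U, ρ < m y) := by
      intro x
      by_cases hxK : x ∈ K
      · obtain ⟨x', hx'⟩ := hno x
        have hμx : μ < m x := lt_of_le_of_lt (csInf_le hμbdd ⟨x', rfl⟩) hx'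
        have h1 : μ < (μ + m x) / 2 := by linarith
        have h2 : (μ + m x) / 2 < m x := by linarith
        have hMlt : Mq P q F < (((μ + m x) / 2 : ℝ) : EReal) := (hMq _).mpr h1
        have hxnot : x ∉ Colev P q F ((μ + m x) / 2) := by
          rw [hColev]; linarith
        obtain ⟨U, hU, ρ, hρ, hdisj⟩ := hsrgi _ hMlt x hxnot
        refine ⟨U, hU, fun _ => ⟨ρ, (hMq ρ).mp hρ, ?_⟩⟩
        intro y hy
        have hynot : y ∉ Colev P q F ρ := by
          intro hyc
          have : y ∈ U ∩ Colev P q F ρ := ⟨hy, hyc⟩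
          rw [hdisj] at this
          exact this
        rw [hColev] at hynot
        exact not_le.mp hynot
      · exact ⟨Set.univ, Filter.univ_mem, fun h => absurd h hxK⟩
    choose U hU hUK using key
    obtain ⟨t, htK, htcov⟩ := hK.elim_nhds_subcover U (fun x _ => hU x)
    have key2 : ∀ x : X, ∃ ρ : ℝ, x ∈ K → (μ < ρ ∧ ∀ y ∈ U x, ρ < m y) := by
      intro x
      by_cases hxK : x ∈ K
      · obtain ⟨ρ, h1, h2⟩ := hUK x hxK
        exact ⟨ρ, fun _ => ⟨h1, h2⟩⟩
      · exact ⟨0, fun h => absurd h hxK⟩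
    choose g hg using key2
    have hmul0 : μ < lam0 := (hMq lam0).mp hlam0
    obtain ⟨a, ⟨x₁, rfl⟩, hx₁⟩ := exists_lt_of_csInf_lt hrange_ne hmul0
    have hx₁K : x₁ ∈ K := subset_closure ((hColev lam0 x₁).mpr hx₁.le)
    have htne : t.Nonempty := by
      have hmem := htcov hx₁K
      rw [Set.mem_iUnion₂] at hmem
      obtain ⟨x₀, hx₀t, _⟩ := hmem
      exact ⟨x₀, hx₀t⟩
    set δ : ℝ := min lam0 (t.inf' htne g) with hδdef
    have hδμ : μ < δ := by
      apply lt_min hmul0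
      rw [Finset.lt_inf'_iff]
      intro x hx
      exact (hg x (htK x hx)).1
    have hδ : ∀ y : X, δ ≤ m y := by
      intro y
      by_cases hyC : y ∈ Colev P q F lam0
      · have hyK : y ∈ K := subset_closure hyC
        have hmem := htcov hyK
        rw [Set.mem_iUnion₂] at hmem
        obtain ⟨x₀, hx₀t, hyU⟩ := hmem
        have h1 := (hg x₀ (htK x₀ hx₀t)).2 y hyU
        have h2 : t.inf' htne g ≤ g x₀ := Finset.inf'_le g hx₀t
        calc δ ≤ t.inf' htne g := min_le_right _ _
          _ ≤ g x₀ := h2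
          _ ≤ m y := h1.le
      · rw [hColev] at hyC
        exact le_trans (min_le_left _ _) (not_le.mp hyC).le
    have hcon : δ ≤ μ := le_csInf hrange_ne (by rintro a ⟨y, rfl⟩; exact hδ y)
    linarith
  -- conclusion
  obtain ⟨xbar, hxbar⟩ := hminex
  refine ⟨xbar, ?_⟩
  intro hcon
  obtain ⟨x, hxne, hsub⟩ := hcon
  have hz : zsel xbar ∈ F x + interior P := hsub (hzmem xbar)
  rw [Set.mem_add] at hz
  obtain ⟨w, hw, p, hp, hwp⟩ := hz
  obtain ⟨ε, hε, hεP⟩ := heps p hp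
  have hwS : w - (psi P q w) • q ∈ P := hpsimem x w hw
  have hmem : zsel xbar - (psi P q w + ε) • q ∈ P := by
    have heq : zsel xbar - (psi P q w + ε) • q = (w - (psi P q w) • q) + (p - ε • q) := by
      rw [← hwp]; module
    rw [heq]
    exact hPadd _ hwS _ hεP
  have h1 : psi P q w + ε ≤ m xbar := hle_psi _ _ hmem
  have h2 : m x ≤ psi P q w := hzmin x w hw
  have h3 : m xbar ≤ m x := hxbar x
  linarith
end

section
/- Let X = ℝ^n and Y = ℝ^m with the usual norm topologies, and let F : ℝ^n ⇉ ℝ^m be l-colevel closed, P-closed-valued (F(x) + P closed for all x) and bounded-valued (F(x) bounded for all x). Assume that for some x₀, Colev_{<^l}(F, F(x₀)) is bounded and F(Colev_{<^l}(F, F(x₀))) = ⋃{F(x) : x ∈ Colev_{<^l}(F, F(x₀))} is a P-bounded set. Then l-SWEff(F) is nonempty and compact. -/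
open Pointwise

section AuxiliaryLemmas
open Bornology

section Aux
variable {E : Type*} [NormedAddCommGroup E] [NormedSpace ℝ E]

/-- In any finite nonempty set, a transitive irreflexive relation has a maximal element. -/
lemma exists_max_finset {α : Type*} (r : α → α → Prop)
    (htr : ∀ a b c, r a b → r b c → r a c) (hirr : ∀ a, ¬ r a a)
    (s : Finset α) (hs : s.Nonempty) : ∃ x ∈ s, ∀ y ∈ s, ¬ r x y := by
  classical
  induction s using Finset.induction_on with
  | empty => exact absurd hs (by simp)
  | @insert a s ha ih =>
    rcases s.eq_empty_or_nonempty with rfl | hsne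
    · exact ⟨a, by simp, by simpa using hirr a⟩
    · obtain ⟨x, hxs, hx⟩ := ih hsne
      by_cases hxa : r x a
      · refine ⟨a, Finset.mem_insert_self _ _, ?_⟩
        intro y hy
        rcases Finset.mem_insert.1 hy with rfl | hy
        · exact hirr y
        · intro hay; exact hx y hy (htr _ _ _ hxa hay)
      · refine ⟨x, Finset.mem_insert_of_mem hxs, ?_⟩
        intro y hy
        rcases Finset.mem_insert.1 hy with rfl | hy
        · exact hxa
        · exact hx y hy

section Cone
variable (P : Set E) (hPclosed : IsClosed P) (hPconv : Convex ℝ P)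
  (hP0 : (0 : E) ∈ P) (hPcone : ∀ c : ℝ, 0 < c → ∀ y ∈ P, c • y ∈ P)
  (hPuniv : P ≠ Set.univ) (q : E) (hq : q ∈ interior P)

include hPconv hPcone in
lemma P_add : ∀ a ∈ P, ∀ b ∈ P, a + b ∈ P := by
  intro a ha b hb
  have hmid : (1/2 : ℝ) • a + (1/2 : ℝ) • b ∈ P :=
    hPconv ha hb (by norm_num) (by norm_num) (by norm_num)
  have := hPcone 2 (by norm_num) _ hmid
  simpa [smul_add, smul_smul] using this

include hPconv hPcone in
lemma interior_P_add : ∀ a ∈ interior P, ∀ b ∈ P, a + b ∈ interior P := by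
  intro a ha b hb
  rw [mem_interior]
  refine ⟨(· + b) '' interior P, ?_, ?_, ⟨a, ha, rfl⟩⟩
  · rintro _ ⟨z, hz, rfl⟩
    exact P_add P hPconv hPcone z (interior_subset hz) b hb
  · exact (isOpenMap_add_right b) _ isOpen_interior

include hPconv hPcone hPuniv hq in
lemma neg_q_not_mem : -q ∉ P := by
  intro h
  have h0 : (0 : E) ∈ interior P := by
    have := interior_P_add P hPconv hPcone q hq (-q) h
    simpa using this
  obtain ⟨ε, hε, hball⟩ := Metric.isOpen_iff.1 isOpen_interior 0 h0
  apply hPuniv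
  ext z
  simp only [Set.mem_univ, iff_true]
  by_cases hz : z = 0
  · subst hz
    exact interior_subset h0
  · have hzn : (0:ℝ) < ‖z‖ := norm_pos_iff.2 hz
    have hmem : (ε / (2 * ‖z‖)) • z ∈ interior P := by
      apply hball
      simp only [Metric.mem_ball, dist_zero_right, norm_smul, Real.norm_eq_abs]
      rw [abs_of_pos (by positivity)]
      rw [div_mul_eq_mul_div, mul_comm]
      rw [div_lt_iff₀ (by positivity)]
      nlinarith
    have := hPcone ((2 * ‖z‖) / ε) (by positivity) _ (interior_subset hmem)
    rwa [smul_smul, div_mul_div_comm, mul_comm ε, div_self (by positivity), one_smul] at this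

include hPclosed hPconv hP0 hPcone hPuniv hq in
/-- The key irreflexivity lemma: a nonempty bounded set `A` with `A + P` closed
cannot satisfy `A ⊆ A + interior P`. -/
lemma key_irrefl [ProperSpace E] (A : Set E) (hA : A.Nonempty) (hAbd : IsBounded A)
    (hAP : IsClosed (A + P)) : ¬ A ⊆ A + interior P := by
  intro hsub
  classical
  -- ball around q inside P
  obtain ⟨ε, hε, hballq⟩ := Metric.isOpen_iff.1 isOpen_interior q hq
  have hballq' : Metric.ball q ε ⊆ P := hballq.trans interior_subset
  -- ball around -q outside P
  have hnq : -q ∉ P := neg_q_not_mem P hPconv hPcone hPuniv q hq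
  obtain ⟨ε', hε', hballnq⟩ := Metric.isOpen_iff.1 hPclosed.isOpen_compl (-q) hnq
  -- the scalarization
  set S : E → Set ℝ := fun y => {t : ℝ | t • q - y ∈ P} with hS
  have hSne : ∀ y, (S y).Nonempty := by
    intro y
    refine ⟨‖y‖ / ε + 1, ?_⟩
    have ht : (0:ℝ) < ‖y‖ / ε + 1 := by positivity
    have : (‖y‖ / ε + 1) • q - y = (‖y‖ / ε + 1) • (q - (‖y‖ / ε + 1)⁻¹ • y) := by
      rw [smul_sub, smul_smul, mul_inv_cancel₀ ht.ne', one_smul]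
    rw [Set.mem_setOf_eq, this]
    apply hPcone _ ht
    apply hballq'
    simp only [Metric.mem_ball, dist_eq_norm]
    rw [show q - (‖y‖ / ε + 1)⁻¹ • y - q = -((‖y‖ / ε + 1)⁻¹ • y) by abel]
    rw [norm_neg, norm_smul, Real.norm_eq_abs, abs_of_pos (inv_pos.2 ht)]
    rw [inv_mul_eq_div, div_lt_iff₀ ht]
    have hkey : ε * (‖y‖ / ε + 1) = ‖y‖ + ε := by field_simp
    linarith
  have hSbdd : ∀ y, BddBelow (S y) := by
    intro y
    refine ⟨-(‖y‖ / ε' + 1), ?_⟩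
    intro t ht
    by_contra hlt
    push_neg at hlt
    have hpos : (0:ℝ) < ‖y‖ / ε' + 1 := by positivity
    have hmt : (0:ℝ) < -t := by linarith
    have hmem : (-t)⁻¹ • (t • q - y) ∈ P := hPcone _ (inv_pos.2 hmt) _ ht
    have heq : (-t)⁻¹ • (t • q - y) = -q - (-t)⁻¹ • y := by
      rw [smul_sub, smul_smul]
      congr 1
      rw [show (-t)⁻¹ * t = -1 by rw [inv_neg, neg_mul, inv_mul_cancel₀ (show t ≠ 0 from fun h => by linarith)]]
      simp
    rw [heq] at hmem
    apply hballnq _ hmem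
    simp only [Metric.mem_ball, dist_eq_norm]
    rw [show -q - (-t)⁻¹ • y - -q = -((-t)⁻¹ • y) by abel]
    rw [norm_neg, norm_smul, Real.norm_eq_abs, abs_of_pos (inv_pos.2 hmt)]
    rw [inv_mul_eq_div, div_lt_iff₀ hmt]
    have hkey : ε' * (‖y‖ / ε' + 1) = ‖y‖ + ε' := by field_simp
    nlinarith
  set ξ : E → ℝ := fun y => sInf (S y) with hξ
  have hmono : ∀ y, ∀ p ∈ P, ξ y ≤ ξ (y + p) := by
    intro y p hp
    apply csInf_le_csInf (hSbdd y) (hSne (y + p))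
    intro t ht
    have h1 : t • q - (y + p) + p ∈ P := P_add P hPconv hPcone _ ht _ hp
    have h2 : t • q - (y + p) + p = t • q - y := by abel
    rw [h2] at h1
    exact h1
  have hshift : ∀ y, ∀ c : ℝ, ξ y + c ≤ ξ (y + c • q) := by
    intro y c
    apply le_csInf (hSne _)
    intro t ht
    have : (t - c) • q - y ∈ P := by
      have h2 : (t - c) • q - y = t • q - (y + c • q) := by
        rw [sub_smul]; abel
      rw [h2]; exact ht
    have := csInf_le (hSbdd y) this
    linarith
  have hlip : ∀ y y', ξ y' ≤ ξ y + (2 / ε) * ‖y' - y‖ := by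
    intro y y'
    have hb : ∀ t ∈ S y, ξ y' - (2 / ε) * ‖y' - y‖ ≤ t := by
      intro t ht
      have hmem : (t + (2 / ε) * ‖y' - y‖) ∈ S y' := by
        have hdecomp : (t + (2 / ε) * ‖y' - y‖) • q - y' =
            (t • q - y) + (((2 / ε) * ‖y' - y‖) • q - (y' - y)) := by
          rw [add_smul]; abel
        rw [Set.mem_setOf_eq, hdecomp]
        apply P_add P hPconv hPcone _ ht
        by_cases hyy : y' = y
        · simp [hyy, hP0]
        · have hd : (0:ℝ) < ‖y' - y‖ := norm_pos_iff.2 (sub_ne_zero.2 hyy)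
          have hc : (0:ℝ) < (2 / ε) * ‖y' - y‖ := by positivity
          have heq : ((2 / ε) * ‖y' - y‖) • q - (y' - y) =
              ((2 / ε) * ‖y' - y‖) • (q - ((2 / ε) * ‖y' - y‖)⁻¹ • (y' - y)) := by
            rw [smul_sub, smul_smul, mul_inv_cancel₀ hc.ne', one_smul]
          rw [heq]
          apply hPcone _ hc
          apply hballq'
          simp only [Metric.mem_ball, dist_eq_norm]
          rw [show q - ((2 / ε) * ‖y' - y‖)⁻¹ • (y' - y) - q
              = -(((2 / ε) * ‖y' - y‖)⁻¹ • (y' - y)) by abel]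
          rw [norm_neg, norm_smul, Real.norm_eq_abs, abs_of_pos (inv_pos.2 hc)]
          have hcomp : ((2 / ε) * ‖y' - y‖)⁻¹ * ‖y' - y‖ = ε / 2 := by
            field_simp
          rw [hcomp]
          linarith
      have := csInf_le (hSbdd y') hmem
      linarith
    have := le_csInf (hSne y) hb
    linarith
  have hcont : Continuous ξ := by
    have hK : (0:ℝ) ≤ 2 / ε := by positivity
    apply LipschitzWith.continuous (K := ⟨2 / ε, hK⟩)
    apply LipschitzWith.of_dist_le_mul
    intro a b
    rw [Real.dist_eq, abs_sub_le_iff]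
    constructor
    · have := hlip b a
      rw [dist_eq_norm]
      have h2 : ‖a - b‖ = ‖a - b‖ := rfl
      change _ ≤ (2 / ε) * _
      linarith [hlip b a]
    · change _ ≤ (2 / ε) * _
      have : ‖b - a‖ = ‖a - b‖ := norm_sub_rev b a
      have h3 := hlip a b
      rw [this] at h3
      rw [dist_eq_norm]
      linarith
  -- closure of A is compact; ξ attains its min there
  have hclA : IsCompact (closure A) := hAbd.isCompact_closure
  have hclAne : (closure A).Nonempty := hA.closure
  obtain ⟨astar, hastarcl, hmin⟩ := hclA.exists_isMinOn hclAne hcont.continuousOn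
  -- astar ∈ A + P
  have hAsub : A ⊆ A + P := fun a ha => ⟨a, ha, 0, hP0, by simp⟩
  have hastarAP : astar ∈ A + P := by
    have : closure A ⊆ A + P := by
      rw [← hAP.closure_eq]
      exact closure_mono hAsub
    exact this hastarcl
  obtain ⟨a, haA, p, hp, hap⟩ := hastarAP
  have hap2 : a + p = astar := hap
  -- ξ a = ξ astar, min value
  have h1 : ξ a ≤ ξ astar := by
    have := hmono a p hp
    rwa [hap2] at this
  have h2 : ξ astar ≤ ξ a := hmin (subset_closure haA)
  -- a ∈ A + interior P
  obtain ⟨a', ha'A, p', hp', hap'⟩ := hsub haA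
  have hap'2 : a' + p' = a := hap'
  -- find c > 0 with p' - c • q ∈ P
  have : ∃ c : ℝ, 0 < c ∧ p' - c • q ∈ P := by
    have hcont2 : ContinuousAt (fun c : ℝ => p' - c • q) 0 := by fun_prop
    have h0 : (fun c : ℝ => p' - c • q) 0 ∈ interior P := by simpa using hp'
    have := hcont2.preimage_mem_nhds (isOpen_interior.mem_nhds h0)
    obtain ⟨δ, hδ, hδsub⟩ := Metric.mem_nhds_iff.1 this
    refine ⟨δ/2, by positivity, ?_⟩
    have : (δ/2 : ℝ) ∈ Metric.ball (0:ℝ) δ := by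
      simp only [Metric.mem_ball, dist_zero_right, Real.norm_eq_abs,
        abs_of_pos (show (0:ℝ) < δ/2 by positivity)]
      linarith
    exact interior_subset (hδsub this)
  obtain ⟨c, hc, hpc⟩ := this
  have hdecomp : a = (a' + c • q) + (p' - c • q) := by rw [← hap'2]; abel
  have h3 : ξ (a' + c • q) ≤ ξ a := by
    rw [hdecomp]; exact hmono _ _ hpc
  have h4 : ξ a' + c ≤ ξ (a' + c • q) := hshift a' c
  have h5 : ξ astar ≤ ξ a' := hmin (subset_closure ha'A)
  linarith

end Cone
end Aux

end AuxiliaryLemmas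

/-- Let `X = ℝⁿ`, `Y = ℝᵐ`, `F` `l`-colevel closed, `P`-closed-valued and bounded-valued.
If for some `x₀` the set `Colev_{<ˡ}(F, F(x₀))` is bounded and
`F(Colev_{<ˡ}(F, F(x₀)))` is `P`-bounded, then `l-SWEff(F)` is nonempty and compact. -/
theorem stmt16 {n m : ℕ}
    (P : Set (EuclideanSpace ℝ (Fin m))) (hPclosed : IsClosed P) (hPconv : Convex ℝ P)
    (hP0 : (0 : EuclideanSpace ℝ (Fin m)) ∈ P)
    (hPcone : ∀ c : ℝ, 0 < c → ∀ y ∈ P, c • y ∈ P)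
    (hPne : P ≠ {0}) (hPuniv : P ≠ Set.univ)
    (q : EuclideanSpace ℝ (Fin m)) (hq : q ∈ interior P)
    (F : EuclideanSpace ℝ (Fin n) → Set (EuclideanSpace ℝ (Fin m)))
    (hF : ∀ x, (F x).Nonempty)
    (hclev : ∀ B : Set (EuclideanSpace ℝ (Fin m)), IsClosed (ColevB P F B))
    (hPcl : ∀ x, IsClosed (F x + P))
    (hbd : ∀ x, Bornology.IsBounded (F x))
    (x₀ : EuclideanSpace ℝ (Fin n))
    (hbd₀ : Bornology.IsBounded (ColevB P F (F x₀)))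
    (hPbd₀ : PBounded P (⋃ x ∈ ColevB P F (F x₀), F x)) :
    {x | SWEff P F x}.Nonempty ∧ IsCompact {x | SWEff P F x} := by
  classical
  set r : EuclideanSpace ℝ (Fin n) → EuclideanSpace ℝ (Fin n) → Prop :=
    fun x y => F x ⊆ F y + interior P with hr
  have hirr : ∀ x, ¬ r x x := fun x =>
    key_irrefl P hPclosed hPconv hP0 hPcone hPuniv q hq (F x) (hF x) (hbd x) (hPcl x)
  have htr : ∀ a b c, r a b → r b c → r a c := by
    intro a b c h1 h2
    refine h1.trans ?_
    have h3 : F b + interior P ⊆ (F c + interior P) + interior P :=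
      Set.add_subset_add_right h2
    refine h3.trans ?_
    rw [add_assoc]
    apply Set.add_subset_add_left
    intro z hz
    obtain ⟨u, hu, v, hv, hz'⟩ := hz
    have hz2 : u + v = z := hz'
    rw [← hz2]
    exact interior_P_add P hPconv hPcone u hu v (interior_subset hv)
  have hSW : {x | SWEff P F x} = ⋂ y, ColevB P F (F y) := by
    ext x
    simp only [Set.mem_setOf_eq, SWEff, Set.mem_iInter, ColevB]
    constructor
    · intro h y hy
      rcases eq_or_ne y x with rfl | hne
      · exact hirr y hy
      · exact h ⟨y, hne, hy⟩
    · rintro h ⟨y, hne, hy⟩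
      exact h y hy
  set D := ColevB P F (F x₀) with hD
  have hx0D : x₀ ∈ D := hirr x₀
  have hDc : IsCompact D := Metric.isCompact_of_isClosed_isBounded (hclev _) hbd₀
  have hsubD : (⋂ y, ColevB P F (F y)) ⊆ D := Set.iInter_subset _ x₀
  have hne : (⋂ y, ColevB P F (F y)).Nonempty := by
    by_contra hcon
    rw [Set.not_nonempty_iff_eq_empty] at hcon
    have hDe : (D ∩ ⋂ y, ColevB P F (F y)) = ∅ := by rw [hcon]; simp
    obtain ⟨t, ht⟩ := hDc.elim_finite_subfamily_closed _ (fun y => hclev (F y)) hDe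
    obtain ⟨x, hxT, hx⟩ := exists_max_finset r htr hirr (insert x₀ t)
      ⟨x₀, Finset.mem_insert_self _ _⟩
    have hxD : x ∈ D := hx x₀ (Finset.mem_insert_self _ _)
    have hmem : x ∈ D ∩ ⋂ y ∈ t, ColevB P F (F y) :=
      ⟨hxD, Set.mem_iInter₂.2 fun y hy => hx y (Finset.mem_insert_of_mem hy)⟩
    rw [ht] at hmem
    exact hmem
  constructor
  · rw [hSW]; exact hne
  · rw [hSW]
    exact Metric.isCompact_of_isClosed_isBounded (isClosed_iInter fun y => hclev _)
      (hbd₀.subset hsubD)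
end
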